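/- Each of the twelve 3×3 integer matrices G_n (the south-east blocks of the conjugated arbitrage matrices) maps the set {0, ±s₁, ±s₂, ±s₃, ±s₄, ±s₅, ±s₆} into itself, where s₁=(1,0,1), s₂=(1,0,0), s₃=(0,0,1), s₄=(1,1,1), s₅=(0,1,0), s₆=(0,1,1) are row vectors acted on by right multiplication. -/

import Mathlib

/-- The twelve `3×3` south-east blocks `G_n` of the conjugated strong-arbitrage matrices. -/
def G : Fin 12 → Matrix (Fin 3) (Fin 3) ℝ :=
  ![!![0,0,-1; 0,1,0; 0,0,1],
    !![1,0,0; 1,1,1; -1,0,0],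
    !![0,0,0; 0,1,0; 0,0,1],
    !![0,0,0; 0,1,0; 1,0,1],
    !![1,0,0; 0,1,1; 0,0,0],
    !![1,0,1; 0,1,0; 0,0,0],
    !![0,-1,-1; 0,1,0; 0,0,1],
    !![1,0,0; -1,0,-1; 0,0,1],
    !![1,0,0; 0,0,0; 0,1,1],
    !![1,0,0; 0,0,0; 0,0,1],
    !![1,1,1; 0,1,0; 0,-1,0],
    !![1,0,0; 0,0,-1; 0,0,1]]

def s1 : Fin 3 → ℝ := ![1,0,1]
def s2 : Fin 3 → ℝ := ![1,0,0]
def s3 : Fin 3 → ℝ := ![0,0,1]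
def s4 : Fin 3 → ℝ := ![1,1,1]
def s5 : Fin 3 → ℝ := ![0,1,0]
def s6 : Fin 3 → ℝ := ![0,1,1]

/-- The set `{0, ±s₁, …, ±s₆}`. -/
def S : Set (Fin 3 → ℝ) :=
  {0, s1, -s1, s2, -s2, s3, -s3, s4, -s4, s5, -s5, s6, -s6}

theorem keyAux0 (w : Fin 3 → ℝ) (hw : w ∈ S) : Matrix.vecMul w (G 0) ∈ S := by
  have hG : G 0 = !![0,0,-1; 0,1,0; 0,0,1] := rfl
  rw [hG]
  rcases hw with rfl|rfl|rfl|rfl|rfl|rfl|rfl|rfl|rfl|rfl|rfl|rfl|rfl <;>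
  · simp only [S, s1, s2, s3, s4, s5, s6, Set.mem_insert_iff, Set.mem_singleton_iff,
      funext_iff, Fin.forall_fin_succ, Fin.forall_fin_zero_pi]
    simp [Matrix.vecMul, dotProduct, Fin.sum_univ_three, Matrix.vecHead,
      Matrix.vecTail]

theorem keyAux1 (w : Fin 3 → ℝ) (hw : w ∈ S) : Matrix.vecMul w (G 1) ∈ S := by
  have hG : G 1 = !![1,0,0; 1,1,1; -1,0,0] := rfl
  rw [hG]
  rcases hw with rfl|rfl|rfl|rfl|rfl|rfl|rfl|rfl|rfl|rfl|rfl|rfl|rfl <;>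
  · simp only [S, s1, s2, s3, s4, s5, s6, Set.mem_insert_iff, Set.mem_singleton_iff,
      funext_iff, Fin.forall_fin_succ, Fin.forall_fin_zero_pi]
    simp [Matrix.vecMul, dotProduct, Fin.sum_univ_three, Matrix.vecHead,
      Matrix.vecTail]

theorem keyAux2 (w : Fin 3 → ℝ) (hw : w ∈ S) : Matrix.vecMul w (G 2) ∈ S := by
  have hG : G 2 = !![0,0,0; 0,1,0; 0,0,1] := rfl
  rw [hG]
  rcases hw with rfl|rfl|rfl|rfl|rfl|rfl|rfl|rfl|rfl|rfl|rfl|rfl|rfl <;>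
  · simp only [S, s1, s2, s3, s4, s5, s6, Set.mem_insert_iff, Set.mem_singleton_iff,
      funext_iff, Fin.forall_fin_succ, Fin.forall_fin_zero_pi]
    simp [Matrix.vecMul, dotProduct, Fin.sum_univ_three, Matrix.vecHead,
      Matrix.vecTail]

theorem keyAux3 (w : Fin 3 → ℝ) (hw : w ∈ S) : Matrix.vecMul w (G 3) ∈ S := by
  have hG : G 3 = !![0,0,0; 0,1,0; 1,0,1] := rfl
  rw [hG]
  rcases hw with rfl|rfl|rfl|rfl|rfl|rfl|rfl|rfl|rfl|rfl|rfl|rfl|rfl <;>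
  · simp only [S, s1, s2, s3, s4, s5, s6, Set.mem_insert_iff, Set.mem_singleton_iff,
      funext_iff, Fin.forall_fin_succ, Fin.forall_fin_zero_pi]
    simp [Matrix.vecMul, dotProduct, Fin.sum_univ_three, Matrix.vecHead,
      Matrix.vecTail]

theorem keyAux4 (w : Fin 3 → ℝ) (hw : w ∈ S) : Matrix.vecMul w (G 4) ∈ S := by
  have hG : G 4 = !![1,0,0; 0,1,1; 0,0,0] := rfl
  rw [hG]
  rcases hw with rfl|rfl|rfl|rfl|rfl|rfl|rfl|rfl|rfl|rfl|rfl|rfl|rfl <;>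
  · simp only [S, s1, s2, s3, s4, s5, s6, Set.mem_insert_iff, Set.mem_singleton_iff,
      funext_iff, Fin.forall_fin_succ, Fin.forall_fin_zero_pi]
    simp [Matrix.vecMul, dotProduct, Fin.sum_univ_three, Matrix.vecHead,
      Matrix.vecTail]

theorem keyAux5 (w : Fin 3 → ℝ) (hw : w ∈ S) : Matrix.vecMul w (G 5) ∈ S := by
  have hG : G 5 = !![1,0,1; 0,1,0; 0,0,0] := rfl
  rw [hG]
  rcases hw with rfl|rfl|rfl|rfl|rfl|rfl|rfl|rfl|rfl|rfl|rfl|rfl|rfl <;>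
  · simp only [S, s1, s2, s3, s4, s5, s6, Set.mem_insert_iff, Set.mem_singleton_iff,
      funext_iff, Fin.forall_fin_succ, Fin.forall_fin_zero_pi]
    simp [Matrix.vecMul, dotProduct, Fin.sum_univ_three, Matrix.vecHead,
      Matrix.vecTail]

theorem keyAux6 (w : Fin 3 → ℝ) (hw : w ∈ S) : Matrix.vecMul w (G 6) ∈ S := by
  have hG : G 6 = !![0,-1,-1; 0,1,0; 0,0,1] := rfl
  rw [hG]
  rcases hw with rfl|rfl|rfl|rfl|rfl|rfl|rfl|rfl|rfl|rfl|rfl|rfl|rfl <;>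
  · simp only [S, s1, s2, s3, s4, s5, s6, Set.mem_insert_iff, Set.mem_singleton_iff,
      funext_iff, Fin.forall_fin_succ, Fin.forall_fin_zero_pi]
    simp [Matrix.vecMul, dotProduct, Fin.sum_univ_three, Matrix.vecHead,
      Matrix.vecTail]

theorem keyAux7 (w : Fin 3 → ℝ) (hw : w ∈ S) : Matrix.vecMul w (G 7) ∈ S := by
  have hG : G 7 = !![1,0,0; -1,0,-1; 0,0,1] := rfl
  rw [hG]
  rcases hw with rfl|rfl|rfl|rfl|rfl|rfl|rfl|rfl|rfl|rfl|rfl|rfl|rfl <;>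
  · simp only [S, s1, s2, s3, s4, s5, s6, Set.mem_insert_iff, Set.mem_singleton_iff,
      funext_iff, Fin.forall_fin_succ, Fin.forall_fin_zero_pi]
    simp [Matrix.vecMul, dotProduct, Fin.sum_univ_three, Matrix.vecHead,
      Matrix.vecTail]

theorem keyAux8 (w : Fin 3 → ℝ) (hw : w ∈ S) : Matrix.vecMul w (G 8) ∈ S := by
  have hG : G 8 = !![1,0,0; 0,0,0; 0,1,1] := rfl
  rw [hG]
  rcases hw with rfl|rfl|rfl|rfl|rfl|rfl|rfl|rfl|rfl|rfl|rfl|rfl|rfl <;>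
  · simp only [S, s1, s2, s3, s4, s5, s6, Set.mem_insert_iff, Set.mem_singleton_iff,
      funext_iff, Fin.forall_fin_succ, Fin.forall_fin_zero_pi]
    simp [Matrix.vecMul, dotProduct, Fin.sum_univ_three, Matrix.vecHead,
      Matrix.vecTail]

theorem keyAux9 (w : Fin 3 → ℝ) (hw : w ∈ S) : Matrix.vecMul w (G 9) ∈ S := by
  have hG : G 9 = !![1,0,0; 0,0,0; 0,0,1] := rfl
  rw [hG]
  rcases hw with rfl|rfl|rfl|rfl|rfl|rfl|rfl|rfl|rfl|rfl|rfl|rfl|rfl <;>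
  · simp only [S, s1, s2, s3, s4, s5, s6, Set.mem_insert_iff, Set.mem_singleton_iff,
      funext_iff, Fin.forall_fin_succ, Fin.forall_fin_zero_pi]
    simp [Matrix.vecMul, dotProduct, Fin.sum_univ_three, Matrix.vecHead,
      Matrix.vecTail]

theorem keyAux10 (w : Fin 3 → ℝ) (hw : w ∈ S) : Matrix.vecMul w (G 10) ∈ S := by
  have hG : G 10 = !![1,1,1; 0,1,0; 0,-1,0] := rfl
  rw [hG]
  rcases hw with rfl|rfl|rfl|rfl|rfl|rfl|rfl|rfl|rfl|rfl|rfl|rfl|rfl <;>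
  · simp only [S, s1, s2, s3, s4, s5, s6, Set.mem_insert_iff, Set.mem_singleton_iff,
      funext_iff, Fin.forall_fin_succ, Fin.forall_fin_zero_pi]
    simp [Matrix.vecMul, dotProduct, Fin.sum_univ_three, Matrix.vecHead,
      Matrix.vecTail]

theorem keyAux11 (w : Fin 3 → ℝ) (hw : w ∈ S) : Matrix.vecMul w (G 11) ∈ S := by
  have hG : G 11 = !![1,0,0; 0,0,-1; 0,0,1] := rfl
  rw [hG]
  rcases hw with rfl|rfl|rfl|rfl|rfl|rfl|rfl|rfl|rfl|rfl|rfl|rfl|rfl <;>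
  · simp only [S, s1, s2, s3, s4, s5, s6, Set.mem_insert_iff, Set.mem_singleton_iff,
      funext_iff, Fin.forall_fin_succ, Fin.forall_fin_zero_pi]
    simp [Matrix.vecMul, dotProduct, Fin.sum_univ_three, Matrix.vecHead,
      Matrix.vecTail]

theorem key_set_invariant (n : Fin 12) (w : Fin 3 → ℝ) (hw : w ∈ S) :
    Matrix.vecMul w (G n) ∈ S := by
  obtain ⟨k, hk⟩ := n
  interval_cases k
  · exact keyAux0 w hw
  · exact keyAux1 w hw
  · exact keyAux2 w hw
  · exact keyAux3 w hw
  · exact keyAux4 w hw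
  · exact keyAux5 w hw
  · exact keyAux6 w hw
  · exact keyAux7 w hw
  · exact keyAux8 w hw
  · exact keyAux9 w hw
  · exact keyAux10 w hw
  · exact keyAux11 w hw
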